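/- For every integer k ≥ 1, w_k = (1/(πk)) (1 - 1/(2(2k-1)) + ε_k) with 1/(12k(2k-1)) < ε_k < 5/(16k(2k-1)), where w_k = ((2k)!)^2/(2^{4k}(k!)^4). -/

import Mathlib

open Real Filter Topology

noncomputable def wwseq (k : ℕ) : ℝ :=
  ((Nat.factorial (2 * k) : ℝ))^2 / (2 ^ (4 * k) * (Nat.factorial k : ℝ)^4)

noncomputable def eeseq (k : ℕ) : ℝ := π * k * wwseq k

lemma wwseq_pos (k : ℕ) : 0 < wwseq k := by
  unfold wwseq
  have h1 : (0:ℝ) < (Nat.factorial (2*k) : ℝ) := by exact_mod_cast (Nat.factorial_pos _)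
  have h2 : (0:ℝ) < (Nat.factorial k : ℝ) := by exact_mod_cast (Nat.factorial_pos _)
  positivity

lemma eeseq_pos {k : ℕ} (hk : 1 ≤ k) : 0 < eeseq k := by
  have h1 : (0:ℝ) < k := by exact_mod_cast hk
  have h2 := wwseq_pos k
  have h3 := Real.pi_pos
  unfold eeseq; positivity

lemma eeseq_eq_W (k : ℕ) :
    eeseq k = π * ((k:ℝ) / (2*k+1)) / Real.Wallis.W k := by
  have hW := Real.Wallis.W_eq_factorial_ratio k
  have h1 : ((Nat.factorial (2*k)) : ℝ) ≠ 0 := by exact_mod_cast (Nat.factorial_pos _).ne'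
  have h2 : ((Nat.factorial k) : ℝ) ≠ 0 := by exact_mod_cast (Nat.factorial_pos _).ne'
  have h3 : (2:ℝ)^(4*k) ≠ 0 := by positivity
  have h4 : (2*(k:ℝ)+1) ≠ 0 := by positivity
  rw [hW]
  unfold eeseq wwseq
  field_simp

lemma eeseq_tendsto : Tendsto eeseq atTop (𝓝 1) := by
  have h0 : Tendsto (fun k:ℕ => 1/(k:ℝ)) atTop (𝓝 0) := tendsto_one_div_atTop_nhds_zero_nat
  have h2 : Tendsto (fun k:ℕ => 2 + 1/(k:ℝ)) atTop (𝓝 2) := by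
    simpa using (tendsto_const_nhds (x := (2:ℝ))).add h0
  have h3 : Tendsto (fun k:ℕ => (2 + 1/(k:ℝ))⁻¹) atTop (𝓝 (2⁻¹)) := h2.inv₀ two_ne_zero
  have hhalf : Tendsto (fun k:ℕ => (k:ℝ)/(2*k+1)) atTop (𝓝 (1/2)) := by
    rw [show (1:ℝ)/2 = 2⁻¹ by norm_num]
    apply h3.congr'
    filter_upwards [eventually_ge_atTop 1] with k hk
    have hk0 : (k:ℝ) ≠ 0 := by
      have : (0:ℝ) < k := by exact_mod_cast hk
      exact this.ne'
    field_simp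
  have hW := Real.Wallis.tendsto_W_nhds_pi_div_two
  have hpi : (π/2 : ℝ) ≠ 0 := by positivity
  have := ((hhalf.const_mul π).div hW hpi)
  have heq : π * (1/2) / (π/2) = 1 := by
    field_simp
  rw [heq] at this
  exact Tendsto.congr (fun k => (eeseq_eq_W k).symm) this

lemma eeseq_succ (k : ℕ) (hk : 1 ≤ k) :
    eeseq (k+1) = eeseq k * ((2*(k:ℝ)+1)^2 / (4*k*(k+1))) := by
  have hk0 : (k:ℝ) ≠ 0 := by
    have : (0:ℝ) < k := by exact_mod_cast hk
    exact this.ne'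
  unfold eeseq wwseq
  have h2 : 2*(k+1) = (2*k+1)+1 := by ring
  rw [h2, Nat.factorial_succ, Nat.factorial_succ (2*k), Nat.factorial_succ k,
    show 4*(k+1) = 4*k+4 from by ring, pow_add]
  have h1 : ((Nat.factorial (2*k)) : ℝ) ≠ 0 := by exact_mod_cast (Nat.factorial_pos _).ne'
  have h2 : ((Nat.factorial k) : ℝ) ≠ 0 := by exact_mod_cast (Nat.factorial_pos _).ne'
  have h3 : (2:ℝ)^(4*k) ≠ 0 := by positivity
  have h4 : ((k:ℝ)+1) ≠ 0 := by positivity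
  push_cast
  field_simp
  ring

noncomputable def Fb (x : ℝ) : ℝ := 1 - 1/(2*(2*x-1)) + 5/(16*x*(2*x-1))
noncomputable def Gb (x : ℝ) : ℝ := 1 - 1/(2*(2*x-1)) + 1/(12*x*(2*x-1))

lemma Fb_eq {x : ℝ} (hx : 1 ≤ x) : Fb x = (32*x^2-24*x+5)/(16*x*(2*x-1)) := by
  have h1 : (0:ℝ) < x := by linarith
  have h2 : (0:ℝ) < 2*x-1 := by linarith
  unfold Fb
  field_simp
  ring

lemma Gb_eq {x : ℝ} (hx : 1 ≤ x) : Gb x = (24*x^2-18*x+1)/(12*x*(2*x-1)) := by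
  have h1 : (0:ℝ) < x := by linarith
  have h2 : (0:ℝ) < 2*x-1 := by linarith
  unfold Gb
  field_simp
  ring

lemma Fb_pos {x : ℝ} (hx : 1 ≤ x) : 0 < Fb x := by
  rw [Fb_eq hx]
  have h1 : (0:ℝ) < x := by linarith
  have h2 : (0:ℝ) < 2*x-1 := by linarith
  apply div_pos (by nlinarith) (by positivity)

lemma Gb_pos {x : ℝ} (hx : 1 ≤ x) : 0 < Gb x := by
  rw [Gb_eq hx]
  have h1 : (0:ℝ) < x := by linarith
  have h2 : (0:ℝ) < 2*x-1 := by linarith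
  apply div_pos (by nlinarith) (by positivity)

lemma Fb_succ_lt {x : ℝ} (hx : 1 ≤ x) :
    Fb (x+1) < (2*x+1)^2/(4*x*(x+1)) * Fb x := by
  have h1 : (0:ℝ) < x := by linarith
  have h2 : (0:ℝ) < 2*x-1 := by linarith
  have e1 : (0:ℝ) < 16*(x+1)*(2*(x+1)-1) := by nlinarith
  have e2 : (0:ℝ) < 4*x*(x+1) * (16*x*(2*x-1)) := by
    nlinarith [mul_pos (mul_pos h1 h1) (mul_pos (by linarith : (0:ℝ) < x+1) h2)]
  rw [Fb_eq hx, Fb_eq (by linarith : (1:ℝ) ≤ x+1), div_mul_div_comm,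
    div_lt_div_iff₀ e1 e2]
  nlinarith [sq_nonneg x, sq_nonneg (x-1)]

lemma Gb_succ_gt {x : ℝ} (hx : 1 ≤ x) :
    (2*x+1)^2/(4*x*(x+1)) * Gb x < Gb (x+1) := by
  have h1 : (0:ℝ) < x := by linarith
  have h2 : (0:ℝ) < 2*x-1 := by linarith
  have e1 : (0:ℝ) < 12*(x+1)*(2*(x+1)-1) := by nlinarith
  have e2 : (0:ℝ) < 4*x*(x+1) * (12*x*(2*x-1)) := by
    nlinarith [mul_pos (mul_pos h1 h1) (mul_pos (by linarith : (0:ℝ) < x+1) h2)]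
  rw [Gb_eq hx, Gb_eq (by linarith : (1:ℝ) ≤ x+1), div_mul_div_comm,
    div_lt_div_iff₀ e2 e1]
  nlinarith [sq_nonneg x, sq_nonneg (x-1), mul_pos h1 h1, mul_pos (mul_pos h1 h1) h1]

lemma denom_tendsto : Tendsto (fun k:ℕ => 2*(2*(k:ℝ)-1)) atTop atTop := by
  apply tendsto_atTop_mono' atTop ?_ tendsto_natCast_atTop_atTop
  filter_upwards [eventually_ge_atTop 1] with k hk
  have : (1:ℝ) ≤ k := by exact_mod_cast hk
  linarith

lemma denom2_tendsto (c : ℝ) (hc : 1 ≤ c) :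
    Tendsto (fun k:ℕ => c*(k:ℝ)*(2*k-1)) atTop atTop := by
  apply tendsto_atTop_mono' atTop ?_ tendsto_natCast_atTop_atTop
  filter_upwards [eventually_ge_atTop 1] with k hk
  have h : (1:ℝ) ≤ k := by exact_mod_cast hk
  have hcb : (1:ℝ) ≤ c*(2*(k:ℝ)-1) := by nlinarith
  nlinarith [mul_le_mul_of_nonneg_left hcb (by linarith : (0:ℝ) ≤ (k:ℝ))]

lemma Fb_tendsto : Tendsto (fun k:ℕ => Fb k) atTop (𝓝 1) := by
  have t1 := (tendsto_const_nhds (x := (1:ℝ))).div_atTop denom_tendsto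
  have t2 := (tendsto_const_nhds (x := (5:ℝ))).div_atTop (denom2_tendsto 16 (by norm_num))
  have := ((tendsto_const_nhds (x := (1:ℝ))).sub t1).add t2
  unfold Fb
  simpa using this

lemma Gb_tendsto : Tendsto (fun k:ℕ => Gb k) atTop (𝓝 1) := by
  have t1 := (tendsto_const_nhds (x := (1:ℝ))).div_atTop denom_tendsto
  have t2 := (tendsto_const_nhds (x := (1:ℝ))).div_atTop (denom2_tendsto 12 (by norm_num))
  have := ((tendsto_const_nhds (x := (1:ℝ))).sub t1).add t2
  unfold Gb
  simpa using this

lemma lt_one_of_mono (u : ℕ → ℝ) (hlim : Tendsto u atTop (𝓝 1))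
    (hmono : ∀ j, 1 ≤ j → u j < u (j+1)) {k : ℕ} (hk : 1 ≤ k) : u k < 1 := by
  have hstep : ∀ j, k+1 ≤ j → u (k+1) ≤ u j := by
    intro j hj
    induction j, hj using Nat.le_induction with
    | base => exact le_refl _
    | succ n hn ih => exact ih.trans (hmono n (by omega)).le
  have h1 : u (k+1) ≤ 1 := ge_of_tendsto hlim (eventually_atTop.2 ⟨k+1, hstep⟩)
  exact lt_of_lt_of_le (hmono k hk) h1

lemma one_lt_of_anti (u : ℕ → ℝ) (hlim : Tendsto u atTop (𝓝 1))
    (hmono : ∀ j, 1 ≤ j → u (j+1) < u j) {k : ℕ} (hk : 1 ≤ k) : 1 < u k := by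
  have hstep : ∀ j, k+1 ≤ j → u j ≤ u (k+1) := by
    intro j hj
    induction j, hj using Nat.le_induction with
    | base => exact le_refl _
    | succ n hn ih => exact (hmono n (by omega)).le.trans ih
  have h1 : 1 ≤ u (k+1) := le_of_tendsto hlim (eventually_atTop.2 ⟨k+1, hstep⟩)
  exact lt_of_le_of_lt h1 (hmono k hk)

lemma eeseq_lt_Fb {k : ℕ} (hk : 1 ≤ k) : eeseq k < Fb k := by
  have hmono : ∀ j, 1 ≤ j → eeseq j / Fb (j:ℝ) < eeseq (j+1) / Fb ((j+1:ℕ):ℝ) := by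
    intro j hj
    have hx : (1:ℝ) ≤ (j:ℝ) := by exact_mod_cast hj
    have h1 : (0:ℝ) < Fb (j:ℝ) := Fb_pos hx
    have hcast : ((j+1:ℕ):ℝ) = (j:ℝ)+1 := by push_cast; ring
    rw [hcast]
    have h2 : (0:ℝ) < Fb ((j:ℝ)+1) := Fb_pos (by linarith)
    rw [div_lt_div_iff₀ h1 h2, eeseq_succ j hj]
    have hepos := eeseq_pos hj
    calc eeseq j * Fb ((j:ℝ)+1)
        < eeseq j * ((2*(j:ℝ)+1)^2/(4*j*(j+1)) * Fb (j:ℝ)) :=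
          (mul_lt_mul_iff_right₀ hepos).2 (Fb_succ_lt hx)
      _ = eeseq j * ((2*(j:ℝ)+1)^2/(4*j*(j+1))) * Fb (j:ℝ) := by ring
  have hlim : Tendsto (fun j : ℕ => eeseq j / Fb (j:ℝ)) atTop (𝓝 1) := by
    have h := (eeseq_tendsto.div Fb_tendsto one_ne_zero : Tendsto (fun j : ℕ => eeseq j / Fb (j:ℝ)) atTop (𝓝 (1/1))); rwa [div_one] at h
  have := lt_one_of_mono _ hlim hmono hk
  have hx : (1:ℝ) ≤ (k:ℝ) := by exact_mod_cast hk
  have hF := Fb_pos hx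
  calc eeseq k = eeseq k / Fb (k:ℝ) * Fb (k:ℝ) := by field_simp
    _ < 1 * Fb (k:ℝ) := by exact (mul_lt_mul_iff_left₀ hF).2 this
    _ = Fb (k:ℝ) := one_mul _

lemma Gb_lt_eeseq {k : ℕ} (hk : 1 ≤ k) : Gb k < eeseq k := by
  have hmono : ∀ j, 1 ≤ j → eeseq (j+1) / Gb ((j+1:ℕ):ℝ) < eeseq j / Gb (j:ℝ) := by
    intro j hj
    have hx : (1:ℝ) ≤ (j:ℝ) := by exact_mod_cast hj
    have h1 : (0:ℝ) < Gb (j:ℝ) := Gb_pos hx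
    have hcast : ((j+1:ℕ):ℝ) = (j:ℝ)+1 := by push_cast; ring
    rw [hcast]
    have h2 : (0:ℝ) < Gb ((j:ℝ)+1) := Gb_pos (by linarith)
    rw [div_lt_div_iff₀ h2 h1, eeseq_succ j hj]
    have hepos := eeseq_pos hj
    calc eeseq j * ((2*(j:ℝ)+1)^2/(4*j*(j+1))) * Gb (j:ℝ)
        = eeseq j * ((2*(j:ℝ)+1)^2/(4*j*(j+1)) * Gb (j:ℝ)) := by ring
      _ < eeseq j * Gb ((j:ℝ)+1) := (mul_lt_mul_iff_right₀ hepos).2 (Gb_succ_gt hx)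
  have hlim : Tendsto (fun j : ℕ => eeseq j / Gb (j:ℝ)) atTop (𝓝 1) := by
    have h := (eeseq_tendsto.div Gb_tendsto one_ne_zero : Tendsto (fun j : ℕ => eeseq j / Gb (j:ℝ)) atTop (𝓝 (1/1))); rwa [div_one] at h
  have := one_lt_of_anti _ hlim hmono hk
  have hx : (1:ℝ) ≤ (k:ℝ) := by exact_mod_cast hk
  have hG := Gb_pos hx
  calc Gb (k:ℝ) = 1 * Gb (k:ℝ) := (one_mul _).symm
    _ < eeseq k / Gb (k:ℝ) * Gb (k:ℝ) := (mul_lt_mul_iff_left₀ hG).2 this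
    _ = eeseq k := by field_simp

theorem wk_refined_expansion (k : ℕ) (hk : 1 ≤ k) :
    let w := ((Nat.factorial (2 * k) : ℝ))^2 / (2 ^ (4 * k) * (Nat.factorial k : ℝ)^4)
    let ε := π * k * w - 1 + 1 / (2 * (2 * k - 1))
    w = 1 / (π * k) * (1 - 1 / (2 * (2 * k - 1)) + ε) ∧
    1 / (12 * k * (2 * k - 1)) < ε ∧ ε < 5 / (16 * k * (2 * k - 1)) := by
  intro w ε
  have hw : w = wwseq k := rfl
  have he : π * k * w = eeseq k := rfl
  have hx : (1:ℝ) ≤ (k:ℝ) := by exact_mod_cast hk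
  have hk0 : (0:ℝ) < (k:ℝ) := by linarith
  have h2 : (0:ℝ) < 2*(k:ℝ)-1 := by linarith
  have hpi := Real.pi_pos
  refine ⟨?_, ?_, ?_⟩
  · show w = 1 / (π * k) * (1 - 1 / (2 * (2 * (k:ℝ) - 1)) + (π * k * w - 1 + 1 / (2 * (2 * (k:ℝ) - 1))))
    have : (1 - 1 / (2 * (2 * (k:ℝ) - 1)) + (π * k * w - 1 + 1 / (2 * (2 * (k:ℝ) - 1)))) = π * k * w := by
      ring
    rw [this]
    field_simp
  · have := Gb_lt_eeseq hk
    rw [← he] at this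
    unfold Gb at this
    show 1 / (12 * (k:ℝ) * (2 * k - 1)) < π * k * w - 1 + 1 / (2 * (2 * (k:ℝ) - 1))
    linarith
  · have := eeseq_lt_Fb hk
    rw [← he] at this
    unfold Fb at this
    show π * k * w - 1 + 1 / (2 * (2 * (k:ℝ) - 1)) < 5 / (16 * (k:ℝ) * (2 * k - 1))
    linarith
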